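/- Let (V, R) be a finite nonempty DAG having a source s such that every intersection vertex of (V, R) lies in Reach(s). Then (V, R) admits a DAG-tree decomposition of width 1. -/

import Mathlib

/-- A source of a digraph `(V, R)`: a vertex with no `R`-predecessor. -/
def DagSource {V : Type*} (R : V → V → Prop) (s : V) : Prop := ∀ v, ¬ R v s

/-- The set of vertices reachable (under the reflexive-transitive closure of
`R`) from some vertex of `B`. -/
def DagReach {V : Type*} (R : V → V → Prop) (B : Set V) : Set V :=
  {x | ∃ s ∈ B, Relation.ReflTransGen R s x}

/-- `(V, R)` admits a DAG-tree decomposition of width 1: a finite tree `T`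
with a bag of sources at each node, such that every source lies in some bag,
the reachability condition holds along paths of `T`, and every bag has at most
one element. -/
def HasWidth1DTD {V : Type*} (R : V → V → Prop) : Prop :=
  ∃ (ι : Type) (T : SimpleGraph ι) (bag : ι → Set V),
    Finite ι ∧ T.IsTree ∧
    (∀ i, ∀ s ∈ bag i, DagSource R s) ∧
    (∀ s, DagSource R s → ∃ i, s ∈ bag i) ∧
    (∀ (b b1 b2 : ι) (p : T.Path b1 b2), b ∈ p.val.support →
      DagReach R (bag b1) ∩ DagReach R (bag b2) ⊆ DagReach R (bag b)) ∧
    (∀ i, (bag i).ncard ≤ 1)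

/-- An intersection vertex: one reachable from two distinct sources. -/
def DagIntersectionVertex {V : Type*} (R : V → V → Prop) (x : V) : Prop :=
  ∃ s1 s2, s1 ≠ s2 ∧ DagSource R s1 ∧ DagSource R s2 ∧
    Relation.ReflTransGen R s1 x ∧ Relation.ReflTransGen R s2 x

/-- The star graph on `Option α` with center `none`. -/
def StarGraph (α : Type) : SimpleGraph (Option α) where
  Adj a b := (a = none ∧ b ≠ none) ∨ (b = none ∧ a ≠ none)
  symm := by tauto
  loopless := ⟨by rintro a (⟨h1, h2⟩ | ⟨h1, h2⟩) <;> exact h2 h1⟩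

lemma starGraph_support_mem {α : Type} {b1 b2 : Option α}
    (p : (StarGraph α).Walk b1 b2) (hp : p.IsPath) :
    ∀ b ∈ p.support, b = b1 ∨ b = b2 ∨ b = none := by
  induction p with
  | nil => intro b hb; simp only [SimpleGraph.Walk.support_nil, List.mem_singleton] at hb; tauto
  | @cons u x w h q ih =>
    intro b hb
    rw [SimpleGraph.Walk.support_cons, List.mem_cons] at hb
    rcases hb with rfl | hb
    · tauto
    have hq : q.IsPath := hp.of_cons
    have hu : u ∉ q.support := by
      have := hp.support_nodup
      rw [SimpleGraph.Walk.support_cons] at this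
      exact (List.nodup_cons.mp this).1
    rcases ih hq b hb with rfl | rfl | rfl
    · -- b = x
      rcases h with ⟨rfl, hx⟩ | ⟨rfl, hu'⟩
      · -- u = none, x is a leaf; q goes from x to w without visiting none
        cases q with
        | nil => tauto
        | @cons _ y _ h' q' =>
          exfalso
          have hy : y ∈ (SimpleGraph.Walk.cons h' q').support := by
            rw [SimpleGraph.Walk.support_cons]
            exact List.mem_cons_of_mem _ q'.start_mem_support
          rcases h' with ⟨rfl, _⟩ | ⟨rfl, _⟩
          · exact hx rfl
          · exact hu hy
      · tauto
    · tauto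
    · tauto

lemma starGraph_connected (α : Type) : (StarGraph α).Connected := by
  rw [SimpleGraph.connected_iff]
  refine ⟨fun a b => ?_, ⟨none⟩⟩
  have key : ∀ c : Option α, (StarGraph α).Reachable c none := by
    intro c
    rcases Option.eq_none_or_eq_some c with rfl | ⟨y, rfl⟩
    · rfl
    · exact SimpleGraph.Adj.reachable (by right; exact ⟨rfl, by simp⟩)
  exact (key a).trans (key b).symm

lemma starGraph_isAcyclic (α : Type) : (StarGraph α).IsAcyclic := by
  intro v c hc
  cases c with
  | nil => exact hc.not_of_nil
  | @cons _ x _ h q =>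
    rw [SimpleGraph.Walk.cons_isCycle_iff] at hc
    obtain ⟨hq, he⟩ := hc
    cases q with
    | nil => exact (StarGraph α).loopless.irrefl v h
    | @cons _ m _ h1 q2 =>
      rw [SimpleGraph.Walk.edges_cons, List.mem_cons] at he
      push_neg at he
      obtain ⟨he1, he2⟩ := he
      rcases h with ⟨hv, hx⟩ | ⟨hx, hv⟩
      · -- v = none, x ≠ none; then m = none = v
        rcases h1 with ⟨hx', _⟩ | ⟨hm, _⟩
        · exact hx hx'
        · -- m = none = v, so q2 : Walk m v is a path-loop, hence nil
          have hmv : m = v := hm.trans hv.symm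
          subst hmv
          have hq2 : q2.IsPath := hq.of_cons
          have : (⟨q2, hq2⟩ : (StarGraph α).Path m m) = SimpleGraph.Path.nil :=
            SimpleGraph.Path.loop_eq _
          have hq2nil : q2 = SimpleGraph.Walk.nil := congrArg Subtype.val this
          subst hq2nil
          exact he1 (Sym2.eq_swap)
      · -- x = none, v ≠ none; m ≠ none
        have hm : m ≠ none := by
          rcases h1 with ⟨_, hm⟩ | ⟨_, hxne⟩
          · exact hm
          · exact absurd hx hxne
        cases q2 with
        | nil => exact he1 (Sym2.eq_swap)
        | @cons _ y _ h2 q3 =>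
          rcases id h2 with ⟨hm', _⟩ | ⟨hy, _⟩
          · exact hm hm'
          · -- y = none = x, and y ∈ support of the tail, violating nodup
            have hxy : x = y := hx.trans hy.symm
            have hmem : x ∈ (SimpleGraph.Walk.cons h2 q3).support := by
              rw [SimpleGraph.Walk.support_cons]
              exact List.mem_cons_of_mem _ (hxy ▸ q3.start_mem_support)
            have := hq.support_nodup
            rw [SimpleGraph.Walk.support_cons, List.nodup_cons] at this
            exact this.1 hmem

/-- If a finite nonempty DAG has a source `s` such that every intersection
vertex is reachable from `s`, then it admits a DAG-tree decomposition of
width 1. -/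
theorem hasWidth1DTD_of_source_reaching_intersections {V : Type*} [Finite V] [Nonempty V]
    (R : V → V → Prop) (hR : Irreflexive (Relation.TransGen R))
    (s : V) (hs : DagSource R s)
    (hint : ∀ x, DagIntersectionVertex R x → Relation.ReflTransGen R s x) :
    HasWidth1DTD R := by
  classical
  haveI := Fintype.ofFinite V
  set n := Fintype.card V with hn
  set e : V ≃ Fin n := Fintype.equivFin V with he
  refine ⟨Option (Fin n), StarGraph (Fin n),
    fun o => Option.rec ({s} : Set V)
      (fun i => {x | x = e.symm i ∧ DagSource R (e.symm i) ∧ e.symm i ≠ s}) o,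
    inferInstance, ⟨starGraph_connected _, starGraph_isAcyclic _⟩, ?_, ?_, ?_, ?_⟩
  · rintro (_ | i) t ht
    · rw [Set.mem_singleton_iff] at ht; exact ht ▸ hs
    · exact ht.1 ▸ ht.2.1
  · intro t ht
    by_cases hts : t = s
    · exact ⟨none, by simp [hts]⟩
    · exact ⟨some (e t), by simp [ht, hts]⟩
  · rintro b b1 b2 p hb
    rcases starGraph_support_mem p.val p.prop b hb with rfl | rfl | rfl
    · exact Set.inter_subset_left
    · exact Set.inter_subset_right
    · rintro x ⟨⟨t1, ht1, hr1⟩, ⟨t2, ht2, hr2⟩⟩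
      refine ⟨s, rfl, ?_⟩
      -- analyze which bags t1, t2 came from
      match b1, ht1 with
      | none, ht1 =>
        rw [Set.mem_singleton_iff] at ht1; exact ht1 ▸ hr1
      | some i1, ht1 =>
        match b2, ht2 with
        | none, ht2 =>
          rw [Set.mem_singleton_iff] at ht2; exact ht2 ▸ hr2
        | some i2, ht2 =>
          obtain ⟨rfl, hsrc1, hne1⟩ := ht1
          obtain ⟨rfl, hsrc2, hne2⟩ := ht2
          by_cases h12 : i1 = i2
          · -- then b1 = b2; path is a loop, so support is a singleton ≠ none
            subst h12
            exfalso
            have hnil : p.val = SimpleGraph.Walk.nil :=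
              congrArg Subtype.val (SimpleGraph.Path.loop_eq p)
            rw [hnil] at hb
            simp at hb
          · exact hint x ⟨_, _, fun hh => h12 (e.symm.injective hh), hsrc1, hsrc2, hr1, hr2⟩
  · rintro (_ | i)
    · simp
    · calc ({x | x = e.symm i ∧ DagSource R (e.symm i) ∧ e.symm i ≠ s}).ncard
          ≤ ({e.symm i} : Set V).ncard :=
            Set.ncard_le_ncard (fun x hx => hx.1) (Set.finite_singleton _)
        _ = 1 := Set.ncard_singleton _
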